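/- Let K be a pointed closed convex cone in a finite-dimensional real Euclidean space and let F be an extreme ray (one-dimensional face) of K. Then there exists κ > 0 such that d(p, F) ≤ κ · d(p, K) for all p in the linear span of F. -/

import Mathlib

theorem extreme_ray_amenable {E : Type*} [NormedAddCommGroup E] [InnerProductSpace ℝ E]
    [FiniteDimensional ℝ E] (K : Set E)
    (hKcl : IsClosed K) (hKcv : Convex ℝ K)
    (hKcone : ∀ (c : ℝ), 0 ≤ c → ∀ x ∈ K, c • x ∈ K)
    (hpointed : K ∩ (-K) ⊆ {0})
    (v : E) (hv : v ≠ 0)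
    (F : Set E) (hF : F = {p | ∃ t : ℝ, 0 ≤ t ∧ p = t • v})
    (hFK : F ⊆ K)
    (hface : ∀ x y, x ∈ K → y ∈ K → x + y ∈ F → x ∈ F ∧ y ∈ F) :
    ∃ κ : ℝ, 0 < κ ∧ ∀ p : E, p ∈ Submodule.span ℝ F →
      Metric.infDist p F ≤ κ * Metric.infDist p K := by
  have h0F : (0 : E) ∈ F := by rw [hF]; exact ⟨0, le_refl 0, by simp⟩
  have hvF : v ∈ F := by rw [hF]; exact ⟨1, zero_le_one, by simp⟩
  have h0K : (0 : E) ∈ K := hFK h0F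
  have hvK : v ∈ K := hFK hvF
  have hnvK : -v ∉ K := by
    intro h
    exact hv (hpointed ⟨hvK, by simpa using h⟩)
  set δ := Metric.infDist (-v) K with hδdef
  have hδ : 0 < δ := (hKcl.notMem_iff_infDist_pos ⟨0, h0K⟩).1 hnvK
  refine ⟨‖v‖ / δ, div_pos (norm_pos_iff.2 hv) hδ, ?_⟩
  intro p hp
  -- p ∈ span F = span {v}
  have hspan : Submodule.span ℝ F = Submodule.span ℝ {v} := by
    apply le_antisymm
    · rw [Submodule.span_le]
      intro x hx
      rw [hF] at hx
      obtain ⟨t, _, rfl⟩ := hx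
      exact Submodule.smul_mem _ t (Submodule.mem_span_singleton_self v)
    · exact Submodule.span_mono (Set.singleton_subset_iff.2 hvF)
  rw [hspan, Submodule.mem_span_singleton] at hp
  obtain ⟨t, rfl⟩ := hp
  rcases le_or_gt 0 t with ht | ht
  · have hpF : t • v ∈ F := by rw [hF]; exact ⟨t, ht, rfl⟩
    rw [Metric.infDist_zero_of_mem hpF]
    have := Metric.infDist_nonneg (x := t • v) (s := K)
    have : 0 ≤ ‖v‖ / δ := by positivity
    nlinarith
  · -- t < 0
    have h1 : Metric.infDist (t • v) F ≤ |t| * ‖v‖ := by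
      calc Metric.infDist (t • v) F ≤ dist (t • v) 0 := Metric.infDist_le_dist_of_mem h0F
        _ = |t| * ‖v‖ := by rw [dist_zero_right, norm_smul, Real.norm_eq_abs]
    have h2 : |t| * δ ≤ Metric.infDist (t • v) K := by
      refine le_of_not_gt fun hcon => ?_
      obtain ⟨y, hyK, hy⟩ := (Metric.infDist_lt_iff ⟨0, h0K⟩).1 hcon
      have htpos : (0 : ℝ) < |t| := abs_pos.2 ht.ne
      have hyK' : |t|⁻¹ • y ∈ K := hKcone _ (le_of_lt (inv_pos.2 htpos)) y hyK
      have hd : δ ≤ dist (-v) (|t|⁻¹ • y) := Metric.infDist_le_dist_of_mem hyK'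
      have heq : dist (-v) (|t|⁻¹ • y) = |t|⁻¹ * dist (t • v) y := by
        rw [dist_eq_norm, dist_eq_norm]
        have : -v - |t|⁻¹ • y = |t|⁻¹ • (t • v - y) := by
          rw [smul_sub, smul_smul]
          have : |t|⁻¹ * t = -1 := by
            rw [abs_of_neg ht, ← neg_inv, neg_mul, inv_mul_cancel₀ ht.ne]
          rw [this]; simp
        rw [this, norm_smul, Real.norm_eq_abs, abs_of_pos (inv_pos.2 htpos)]
      rw [heq] at hd
      have : |t| * δ ≤ dist (t • v) y := by
        rw [← mul_le_mul_iff_right₀ (inv_pos.2 htpos), ← mul_assoc, inv_mul_cancel₀ htpos.ne',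
          one_mul]
        exact hd
      linarith
    calc Metric.infDist (t • v) F ≤ |t| * ‖v‖ := h1
      _ = (‖v‖ / δ) * (|t| * δ) := by field_simp
      _ ≤ (‖v‖ / δ) * Metric.infDist (t • v) K := by
          apply mul_le_mul_of_nonneg_left h2
          positivity
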